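/- Commutativity of re-encryption with the homomorphic product: re-encrypting the product of two second-level lifted-ElGamal ciphertexts (under key a₁, randomness r₁ and r₂) with re-encryption key g^(a₁·b₂) yields the same first-level ciphertext as the product of the individual re-encryptions. -/

import Mathlib

/-- Second-level lifted-ElGamal encryption `E²(m; r)` under key `a`. -/
def E2 {q : ℕ} {G1 G2 : Type*} [CommGroup G1] [CommGroup G2]
    (g : G1) (Z : G2) (a m r : ZMod q) : G1 × G2 :=
  (g ^ r.val, Z ^ m.val * Z ^ ((a * r).val))

/-- Re-encryption of a second-level ciphertext `(α, β)` with key `rk`: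
`(e(α, rk), β)`. -/
def reenc {G1 G2 : Type*} (e : G1 → G1 → G2) (rk : G1) (ct : G1 × G2) : G2 × G2 :=
  (e ct.1 rk, ct.2)

/-- Re-encryption commutes with the homomorphic product: re-encrypting the
product of two second-level ciphertexts equals the product of the individual
re-encryptions. -/
theorem stmt_16 {q : ℕ} [Fact (Nat.Prime q)]
    {G1 G2 : Type*} [CommGroup G1] [CommGroup G2]
    [Fintype G1] [Fintype G2]
    (hG1 : Fintype.card G1 = q) (hG2 : Fintype.card G2 = q)
    (g : G1) (hg : ∀ x : G1, x ∈ Subgroup.zpowers g)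
    (e : G1 → G1 → G2)
    (hbil : ∀ (x y : G1) (m n : ℤ), e (x ^ m) (y ^ n) = e x y ^ (m * n))
    (Z : G2) (hZdef : Z = e g g)
    (a₁ b₂ : ZMod q) (rk : G1) (hrk : rk = g ^ ((a₁ * b₂).val))
    (m₁ m₂ r₁ r₂ : ZMod q) :
    reenc e rk (E2 g Z a₁ m₁ r₁ * E2 g Z a₁ m₂ r₂)
      = reenc e rk (E2 g Z a₁ m₁ r₁) * reenc e rk (E2 g Z a₁ m₂ r₂) := by
  subst hrk
  simp only [E2, reenc, Prod.mk_mul_mk, Prod.mk.injEq]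
  refine ⟨?_, by trivial⟩
  have h : ∀ n : ℕ, g ^ n = g ^ (n:ℤ) := fun n => (zpow_natCast g n).symm
  rw [← pow_add]; simp only [h]; rw [hbil, hbil, hbil, ← zpow_add]
  push_cast
  ring_nf
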